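/- arXiv:1611.10065 — 3 statements merged into one kernel-verified Lean document; each statement's English description precedes it below -/
import Mathlib

section
/- Let S be a set, φ : S → S injective, 1 ∈ S, 1 ∉ φ(S), and let N = ⋂ {K ⊆ S | 1 ∈ K ∧ φ(K) ⊆ K}. Then the restriction of φ to N maps N into N, is injective, 1 ∈ N, 1 ∉ φ(N), and every element of N other than 1 is in φ(N). Hence (N, φ|_N, 1) satisfies all five Peano/Dedekind conditions. -/
theorem stmt_4 {S : Type*} (φ : S → S) (one : S)
    (hinj : Function.Injective φ) (hone : one ∉ Set.range φ)
    (N : Set S) (hN : N = ⋂₀ {K : Set S | one ∈ K ∧ φ '' K ⊆ K}) :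
    φ '' N ⊆ N ∧ Set.InjOn φ N ∧ one ∈ N ∧ one ∉ φ '' N ∧
      ∀ n ∈ N, n ≠ one → n ∈ φ '' N := by
  subst hN
  have hsub : ∀ K : Set S, one ∈ K → φ '' K ⊆ K →
      ⋂₀ {K : Set S | one ∈ K ∧ φ '' K ⊆ K} ⊆ K := by
    intro K h1 h2 x hx
    exact hx K ⟨h1, h2⟩
  have h1 : one ∈ ⋂₀ {K : Set S | one ∈ K ∧ φ '' K ⊆ K} := fun K hK => hK.1
  have hcl : φ '' ⋂₀ {K : Set S | one ∈ K ∧ φ '' K ⊆ K} ⊆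
      ⋂₀ {K : Set S | one ∈ K ∧ φ '' K ⊆ K} := by
    rintro _ ⟨x, hx, rfl⟩ K hK
    exact hK.2 ⟨x, hx K hK, rfl⟩
  refine ⟨hcl, hinj.injOn, h1, ?_, ?_⟩
  · rintro ⟨x, _, hx⟩
    exact hone ⟨x, hx⟩
  · intro n hn hne
    have := hsub ({one} ∪ φ '' ⋂₀ {K : Set S | one ∈ K ∧ φ '' K ⊆ K})
      (Or.inl rfl) ?_ hn
    · rcases this with h | h
      · exact absurd h hne
      · exact h
    · rintro _ ⟨x, hx, rfl⟩
      rcases hx with hx | hx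
      · simp only [Set.mem_singleton_iff] at hx
        subst hx
        exact Or.inr ⟨x, h1, rfl⟩
      · exact Or.inr ⟨x, hcl hx, rfl⟩
end

section
/- Recursion theorem (Dedekind's Satz 126): given a simply infinite system (N, φ, 1), a set Ω, an element ω ∈ Ω, and a map θ : Ω → Ω, there exists a unique map ψ : N → Ω such that ψ(1) = ω and ψ(φ(n)) = θ(ψ(n)) for all n ∈ N. -/
theorem stmt_7 {N : Type*} (φ : N → N) (one : N)
    (hinj : Function.Injective φ) (hone : one ∉ Set.range φ)
    (hchain : ∀ K : Set N, one ∈ K → φ '' K ⊆ K → K = Set.univ)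
    {Ω : Type*} (ω : Ω) (θ : Ω → Ω) :
    ∃! ψ : N → Ω, ψ one = ω ∧ ∀ n, ψ (φ n) = θ (ψ n) := by
  classical
  -- smallest relation containing (one, ω) and closed under (φ, θ)
  set G : N → Ω → Prop := fun n x => ∀ S : N → Ω → Prop,
    S one ω → (∀ m y, S m y → S (φ m) (θ y)) → S n x with hG
  have Gone : G one ω := fun S h1 _ => h1
  have Gstep : ∀ m y, G m y → G (φ m) (θ y) := fun m y hm S h1 h2 =>
    h2 m y (hm S h1 h2)
  -- inversion at one
  have inv_one : ∀ x, G one x → x = ω := by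
    intro x hx
    have := hx (fun n z => n = one → z = ω) (fun _ => rfl)
      (fun m y _ h => absurd ⟨m, h⟩ hone)
    exact this rfl
  -- inversion at φ n
  have inv_step : ∀ n x, G (φ n) x → ∃ y, G n y ∧ x = θ y := by
    intro n x hx
    have := hx (fun m z => G m z ∧ (m = φ n → ∃ y, G n y ∧ z = θ y))
      ⟨Gone, fun h => absurd ⟨n, h.symm⟩ hone⟩
      (fun m y ⟨hGy, _⟩ => ⟨Gstep m y hGy,
        fun h => ⟨y, by rw [← hinj h]; exact ⟨hGy, rfl⟩⟩⟩)
    exact this.2 rfl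
  -- totality and functionality
  have key : ∀ n : N, ∃! x, G n x := by
    have h := hchain {n | ∃! x, G n x}
      ⟨ω, Gone, inv_one⟩
      (by
        rintro _ ⟨n, ⟨y, hy, huniq⟩, rfl⟩
        refine ⟨θ y, Gstep n y hy, ?_⟩
        intro z hz
        obtain ⟨y', hy', rfl⟩ := inv_step n z hz
        rw [huniq y' hy'])
    intro n
    have : n ∈ Set.univ := Set.mem_univ n
    rw [← h] at this
    exact this
  refine ⟨fun n => (key n).exists.choose, ⟨?_, ?_⟩, ?_⟩
  · exact (key one).unique (key one).exists.choose_spec Gone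
  · intro n
    exact (key (φ n)).unique (key (φ n)).exists.choose_spec
      (Gstep n _ (key n).exists.choose_spec)
  · intro ψ' ⟨h1, h2⟩
    funext n
    have h := hchain {n | ψ' n = (key n).exists.choose}
      (by simp only [Set.mem_setOf_eq, h1]
          exact ((key one).unique Gone (key one).exists.choose_spec))
      (by rintro _ ⟨m, hm, rfl⟩
          simp only [Set.mem_setOf_eq] at hm ⊢
          rw [h2, hm]
          exact (key (φ m)).unique (Gstep m _ (key m).exists.choose_spec)
            (key (φ m)).exists.choose_spec)
    have : n ∈ Set.univ := Set.mem_univ n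
    rw [← h] at this
    exact this
end

section
/- Existence of a simply infinite system implies an infinite set exists, and conversely: if S is Dedekind-infinite (admits an injective non-surjective self-map φ, with some 1 ∉ φ(S)), then the chain of 1 under φ is a simply infinite system. -/
theorem stmt_17 {S : Type*} (φ : S → S) (one : S)
    (hinj : Function.Injective φ) (hone : one ∉ Set.range φ)
    (N : Set S) (hN : N = ⋂₀ {K : Set S | one ∈ K ∧ φ '' K ⊆ K}) :
    Infinite S ∧
    (Set.InjOn φ N ∧ φ '' N ⊆ N ∧ one ∈ N ∧ one ∉ φ '' N ∧
      N = ⋂₀ {K : Set S | K ⊆ N ∧ one ∈ K ∧ φ '' K ⊆ K}) := by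
  have hinf : Infinite S := by
    rw [← not_finite_iff_infinite]
    intro hfin
    exact hone ((Finite.injective_iff_surjective.mp hinj) one)
  have honeN : one ∈ N := by
    rw [hN, Set.mem_sInter]; intro K hK; exact hK.1
  have hmap : φ '' N ⊆ N := by
    rw [hN]; rintro x ⟨y, hy, rfl⟩ K hK
    exact hK.2 ⟨y, hy K hK, rfl⟩
  refine ⟨hinf, hinj.injOn, hmap, honeN, ?_, ?_⟩
  · rintro ⟨y, _, hy⟩; exact hone ⟨y, hy⟩
  · apply subset_antisymm
    · rw [hN]
      intro x hx
      rw [Set.mem_sInter]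
      intro K hK
      exact Set.mem_sInter.mp hx K ⟨hK.2.1, hK.2.2⟩
    · intro x hx
      exact hx N ⟨subset_rfl, honeN, hmap⟩
end
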